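/- Let f, g ∈ 𝔽₂[x₁,…,x_n] be pseudo-monomials. Then either (f g)_R = 0, or (f g)_R is a pseudo-monomial that is a polynomial multiple of both f and g. -/

import Mathlib

open MvPolynomial

/-- The characteristic polynomial `ρ_v = ∏ i, (1 - v_i - x_i)` of a word `v ∈ {0,1}ⁿ = 𝔽₂ⁿ`. -/
noncomputable def rho (n : ℕ) (v : Fin n → ZMod 2) : MvPolynomial (Fin n) (ZMod 2) :=
  ∏ i, (1 - C (v i) - X i)

/-- The neural ideal `J_C = ⟨ρ_v : v ∉ C⟩` of a neural code `C ⊆ {0,1}ⁿ`. -/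
noncomputable def neuralIdeal (n : ℕ) (Co : Set (Fin n → ZMod 2)) :
    Ideal (MvPolynomial (Fin n) (ZMod 2)) :=
  Ideal.span { p | ∃ v, v ∉ Co ∧ p = rho n v }

/-- A pseudo-monomial: `∏_{i∈σ} x_i ∏_{j∈τ} (1 - x_j)` with `σ, τ` disjoint. -/
def IsPseudoMonomial (n : ℕ) (f : MvPolynomial (Fin n) (ZMod 2)) : Prop :=
  ∃ σ τ : Finset (Fin n), Disjoint σ τ ∧
    f = (∏ i ∈ σ, X i) * ∏ j ∈ τ, (1 - X j)

/-- `f` is a minimal pseudo-monomial of the ideal `J`. -/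
def IsMinimalPM (n : ℕ) (J : Ideal (MvPolynomial (Fin n) (ZMod 2)))
    (f : MvPolynomial (Fin n) (ZMod 2)) : Prop :=
  f ∈ J ∧ IsPseudoMonomial n f ∧
    ¬ ∃ g, IsPseudoMonomial n g ∧ g ∈ J ∧ g.totalDegree < f.totalDegree ∧
      ∃ h, f = g * h

/-- The canonical form `CF(J)`: the set of all minimal pseudo-monomials of `J`. -/
def CF (n : ℕ) (J : Ideal (MvPolynomial (Fin n) (ZMod 2))) :
    Set (MvPolynomial (Fin n) (ZMod 2)) :=
  { f | IsMinimalPM n J f }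

/-- An ideal is a pseudo-monomial ideal if it is generated by finitely many pseudo-monomials. -/
def IsPseudoMonomialIdeal (n : ℕ) (J : Ideal (MvPolynomial (Fin n) (ZMod 2))) : Prop :=
  ∃ S : Finset (MvPolynomial (Fin n) (ZMod 2)),
    (∀ f ∈ S, IsPseudoMonomial n f) ∧ J = Ideal.span (S : Set (MvPolynomial (Fin n) (ZMod 2)))

/-- A polynomial is square-free if every variable occurs with exponent at most 1
in every monomial of its support. -/
def IsSquareFreePoly (n : ℕ) (f : MvPolynomial (Fin n) (ZMod 2)) : Prop :=
  ∀ m ∈ f.support, ∀ i, m i ≤ 1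

/-- The Boolean ideal `B = ⟨x_i (1 - x_i) : 1 ≤ i ≤ n⟩`. -/
noncomputable def boolIdeal (n : ℕ) : Ideal (MvPolynomial (Fin n) (ZMod 2)) :=
  Ideal.span { p | ∃ i : Fin n, p = X i * (1 - X i) }

/-- The square-free representative `h_R` of `h` modulo the Boolean ideal:
replace every exponent by its truncation at 1. -/
noncomputable def sqReduce (n : ℕ) (h : MvPolynomial (Fin n) (ZMod 2)) :
    MvPolynomial (Fin n) (ZMod 2) :=
  ∑ m ∈ h.support,
    monomial (Finsupp.mapRange (fun e => min e 1) (by simp) m) (coeff m h)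

/-- The set of reduced products `P(C,D) = {(f g)_R : f ∈ CF(J_C), g ∈ CF(J_D)}`. -/
def reducedProducts (n : ℕ) (Co D : Set (Fin n → ZMod 2)) :
    Set (MvPolynomial (Fin n) (ZMod 2)) :=
  { p | ∃ f ∈ CF n (neuralIdeal n Co), ∃ g ∈ CF n (neuralIdeal n D), p = sqReduce n (f * g) }

/-- The set of minimal reduced products `MP(C,D)`. -/
def minReducedProducts (n : ℕ) (Co D : Set (Fin n → ZMod 2)) :
    Set (MvPolynomial (Fin n) (ZMod 2)) :=
  { h | h ∈ reducedProducts n Co D ∧ h ≠ 0 ∧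
    ¬ ∃ f ∈ reducedProducts n Co D, ∃ g : MvPolynomial (Fin n) (ZMod 2),
      1 ≤ g.totalDegree ∧ h = f * g }

/-- The code `C(U)` of a cover `U = {U_1, …, U_n}` of a topological space `X`. -/
def codeOfCover {X : Type*} [TopologicalSpace X] (n : ℕ) (U : Fin n → Set X) :
    Set (Fin n → ZMod 2) :=
  { v | ((⋂ i ∈ { i : Fin n | v i = 1 }, U i) \ ⋃ j ∈ { j : Fin n | v j = 0 }, U j).Nonempty }
lemma sqReduce_eq (n : ℕ) (h : MvPolynomial (Fin n) (ZMod 2)) :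
    sqReduce n h = AddMonoidAlgebra.mapDomain (fun m => Finsupp.mapRange (fun e => min e 1) (by simp) m) h := by
  rw [AddMonoidAlgebra.mapDomain, Finsupp.mapDomain, Finsupp.sum, AddMonoidAlgebra.ofCoeff_sum, sqReduce]
  exact Finset.sum_congr rfl fun m hm => by rw [← single_eq_monomial]; rfl

lemma sqReduce_add (n : ℕ) (p q : MvPolynomial (Fin n) (ZMod 2)) :
    sqReduce n (p+q) = sqReduce n p + sqReduce n q := by
  rw [sqReduce_eq, sqReduce_eq, sqReduce_eq]; exact AddMonoidAlgebra.mapDomain_add _ _ _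

lemma sqReduce_monomial (n : ℕ) (m : Fin n →₀ ℕ) (c : ZMod 2) :
    sqReduce n (monomial m c) = monomial (Finsupp.mapRange (fun e => min e 1) (by simp) m) c := by
  rw [sqReduce_eq, ← single_eq_monomial, AddMonoidAlgebra.mapDomain_single, single_eq_monomial]

lemma two_eq_zero' (n : ℕ) : (2 : MvPolynomial (Fin n) (ZMod 2)) = 0 :=
  CharTwo.two_eq_zero

lemma sqReduce_mul_X_X (n : ℕ) (h : MvPolynomial (Fin n) (ZMod 2)) (i : Fin n) :
    sqReduce n (h * X i * X i) = sqReduce n (h * X i) := by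
  induction h using MvPolynomial.induction_on' with
  | monomial m c =>
    rw [X, monomial_mul, monomial_mul, sqReduce_monomial, sqReduce_monomial, mul_one, mul_one]
    have : Finsupp.mapRange (fun e => min e 1) (by simp : min 0 1 = 0)
        (m + Finsupp.single i 1 + Finsupp.single i 1)
        = Finsupp.mapRange (fun e => min e 1) (by simp) (m + Finsupp.single i 1) := by
      ext j
      simp only [Finsupp.mapRange_apply, Finsupp.add_apply, Finsupp.single_apply]
      split_ifs <;> omega
    rw [this]
  | add p q hp hq =>
    rw [add_mul, add_mul, sqReduce_add, hp, hq, ← sqReduce_add, ← add_mul]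

lemma sqReduce_mul_X_sub (n : ℕ) (h : MvPolynomial (Fin n) (ZMod 2)) (i : Fin n) :
    sqReduce n (h * X i * (1 - X i)) = 0 := by
  have e : h * X i * (1 - X i) = h * X i + h * X i * X i := by
    linear_combination (-(h * X i * X i)) * two_eq_zero' n
  rw [e, sqReduce_add, sqReduce_mul_X_X, CharTwo.add_self_eq_zero]

lemma sqReduce_mul_sub_sub (n : ℕ) (h : MvPolynomial (Fin n) (ZMod 2)) (i : Fin n) :
    sqReduce n (h * (1 - X i) * (1 - X i)) = sqReduce n (h * (1 - X i)) := by
  have e : h * (1 - X i) * (1 - X i) = h + h * X i * X i := by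
    linear_combination (- h * X i) * two_eq_zero' n
  have e2 : h * (1 - X i) = h + h * X i := by
    linear_combination (- h * X i) * two_eq_zero' n
  rw [e, e2, sqReduce_add, sqReduce_add, sqReduce_mul_X_X]

lemma sqReduce_absorb_X (n : ℕ) (A : Finset (Fin n)) :
    ∀ h : MvPolynomial (Fin n) (ZMod 2), (∀ i ∈ A, ∃ h', h = h' * X i) →
      sqReduce n (h * ∏ i ∈ A, X i) = sqReduce n h := by
  induction A using Finset.induction_on with
  | empty => simp
  | @insert a A ha IH =>
    intro h hyp
    obtain ⟨h', rfl⟩ := hyp a (Finset.mem_insert_self a A)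
    rw [Finset.prod_insert ha]
    have e : h' * X a * (X a * ∏ i ∈ A, X i) = ((h' * ∏ i ∈ A, X i) * X a) * X a := by ring
    rw [e, sqReduce_mul_X_X]
    have e2 : (h' * ∏ i ∈ A, X i) * X a = (h' * X a) * ∏ i ∈ A, X i := by ring
    rw [e2]
    exact IH _ (fun i hi => hyp i (Finset.mem_insert_of_mem hi))

lemma sqReduce_absorb_sub (n : ℕ) (A : Finset (Fin n)) :
    ∀ h : MvPolynomial (Fin n) (ZMod 2), (∀ i ∈ A, ∃ h', h = h' * (1 - X i)) →
      sqReduce n (h * ∏ i ∈ A, (1 - X i)) = sqReduce n h := by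
  induction A using Finset.induction_on with
  | empty => simp
  | @insert a A ha IH =>
    intro h hyp
    obtain ⟨h', rfl⟩ := hyp a (Finset.mem_insert_self a A)
    rw [Finset.prod_insert ha]
    have e : h' * (1 - X a) * ((1 - X a) * ∏ i ∈ A, (1 - X i))
        = ((h' * ∏ i ∈ A, (1 - X i)) * (1 - X a)) * (1 - X a) := by ring
    rw [e, sqReduce_mul_sub_sub]
    have e2 : (h' * ∏ i ∈ A, (1 - X i)) * (1 - X a) = (h' * (1 - X a)) * ∏ i ∈ A, (1 - X i) := by
      ring
    rw [e2]
    exact IH _ (fun i hi => hyp i (Finset.mem_insert_of_mem hi))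

lemma support_prod_sub (n : ℕ) (τ : Finset (Fin n)) :
    ∀ m ∈ (∏ j ∈ τ, (1 - X j) : MvPolynomial (Fin n) (ZMod 2)).support,
      ∀ i, m i ≤ if i ∈ τ then 1 else 0 := by
  induction τ using Finset.induction_on with
  | empty =>
    intro m hm i
    simp only [Finset.prod_empty] at hm
    have : m = 0 := by
      rw [show (1 : MvPolynomial (Fin n) (ZMod 2)) = monomial 0 1 by simp [C_apply.symm]] at hm
      simpa using support_monomial_subset hm
    simp [this]
  | @insert b τ hb IH =>
    intro m hm i
    rw [Finset.prod_insert hb] at hm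
    obtain ⟨c, hc, m', hm', rfl⟩ := Finset.mem_add.mp (MvPolynomial.support_mul _ _ hm)
    have hc' : c = 0 ∨ c = Finsupp.single b 1 := by
      have h1 : ((1 : MvPolynomial (Fin n) (ZMod 2)) - X b).support ⊆
          (1 : MvPolynomial (Fin n) (ZMod 2)).support ∪ (X b).support :=
        MvPolynomial.support_sub _ _ _
      have h2 := h1 hc
      rw [Finset.mem_union] at h2
      rcases h2 with h2 | h2
      · left
        rw [show (1 : MvPolynomial (Fin n) (ZMod 2)) = monomial 0 1 by simp [C_apply.symm]] at h2
        simpa using support_monomial_subset h2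
      · right; simpa [support_X] using h2
    have hIH := IH m' hm' i
    have hIHb := IH m' hm' b
    simp only [Finsupp.add_apply]
    by_cases hib : i = b
    · subst hib
      rw [if_pos (Finset.mem_insert_self i τ)]
      rw [if_neg hb] at hIHb
      have hc2 : c i ≤ 1 := by rcases hc' with rfl | rfl <;> simp [Finsupp.single_apply]
      omega
    · have hc0 : c i = 0 := by
        rcases hc' with rfl | rfl
        · simp
        · exact Finsupp.single_eq_of_ne' (fun h => hib h.symm)
      rw [hc0, zero_add]
      simp only [Finset.mem_insert, hib, false_or]
      exact hIH

lemma support_pm (n : ℕ) (σ τ : Finset (Fin n)) (hd : Disjoint σ τ) :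
    ∀ m ∈ ((∏ i ∈ σ, X i) * ∏ j ∈ τ, (1 - X j) : MvPolynomial (Fin n) (ZMod 2)).support,
      ∀ i, m i ≤ if i ∈ σ ∪ τ then 1 else 0 := by
  induction σ using Finset.induction_on with
  | empty =>
    intro m hm i
    simp only [Finset.prod_empty, one_mul] at hm
    simpa using support_prod_sub n τ m hm i
  | @insert a σ ha IH =>
    intro m hm i
    rw [Finset.prod_insert ha, mul_assoc] at hm
    obtain ⟨c, hc, m', hm', rfl⟩ := Finset.mem_add.mp (MvPolynomial.support_mul _ _ hm)
    rw [support_X, Finset.mem_singleton] at hc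
    subst hc
    have hd' : Disjoint σ τ := (Finset.disjoint_insert_left.mp hd).2
    have haτ : a ∉ τ := (Finset.disjoint_insert_left.mp hd).1
    have hIH := IH hd' m' hm' i
    have hIHa := IH hd' m' hm' a
    simp only [Finsupp.add_apply, Finsupp.single_apply]
    by_cases hia : i = a
    · subst hia
      have h0 : i ∉ σ ∪ τ := by simp [ha, haτ]
      rw [if_neg h0] at hIHa
      have : i ∈ insert i σ ∪ τ := Finset.mem_union_left _ (Finset.mem_insert_self i σ)
      rw [if_pos rfl, if_pos this]
      omega
    · rw [if_neg (fun h : a = i => hia h.symm), zero_add]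
      simp only [Finset.mem_union, Finset.mem_insert, hia, false_or]
      simp only [Finset.mem_union] at hIH
      exact hIH


lemma sqReduce_squarefree (n : ℕ) (h : MvPolynomial (Fin n) (ZMod 2))
    (hsf : ∀ m ∈ h.support, ∀ i, m i ≤ 1) : sqReduce n h = h := by
  rw [sqReduce_eq]
  have hid : Finsupp.mapDomain (α := Fin n →₀ ℕ) id (AddMonoidAlgebra.coeff h) = (AddMonoidAlgebra.coeff h) := Finsupp.mapDomain_id
  have hc : Finsupp.mapDomain (fun m => Finsupp.mapRange (fun e => min e 1) (by simp) m) (AddMonoidAlgebra.coeff h)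
      = (AddMonoidAlgebra.coeff h) := by
    conv_rhs => rw [← hid]
    apply Finsupp.mapDomain_congr
    intro m hm
    ext i
    simp [min_eq_left (hsf m hm i)]
  exact congrArg AddMonoidAlgebra.ofCoeff hc

/-- the reduced product of two pseudo-monomials is `0` or a
pseudo-monomial multiple of both. -/
theorem stmt10 (n : ℕ) (hn : 1 ≤ n) (f g : MvPolynomial (Fin n) (ZMod 2))
    (hf : IsPseudoMonomial n f) (hg : IsPseudoMonomial n g) :
    sqReduce n (f * g) = 0 ∨
      (IsPseudoMonomial n (sqReduce n (f * g)) ∧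
        f ∣ sqReduce n (f * g) ∧ g ∣ sqReduce n (f * g)) := by
  obtain ⟨σ1, τ1, hd1, rfl⟩ := hf
  obtain ⟨σ2, τ2, hd2, rfl⟩ := hg
  by_cases hcase : Disjoint (σ1 ∪ σ2) (τ1 ∪ τ2)
  · right
    set p : MvPolynomial (Fin n) (ZMod 2) :=
      (∏ i ∈ σ1 ∪ σ2, X i) * ∏ j ∈ τ1 ∪ τ2, (1 - X j) with hp
    have pX : ∀ i ∈ σ1 ∩ σ2, ∃ h', p = h' * X i := by
      intro i hi
      have hi' : i ∈ σ1 ∪ σ2 := Finset.mem_union_left _ (Finset.mem_inter.mp hi).1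
      refine ⟨(∏ k ∈ (σ1 ∪ σ2).erase i, X k) * ∏ j ∈ τ1 ∪ τ2, (1 - X j), ?_⟩
      rw [hp, ← Finset.mul_prod_erase _ _ hi']
      ring
    have key : sqReduce n (((∏ i ∈ σ1, X i) * ∏ j ∈ τ1, (1 - X j)) *
        ((∏ i ∈ σ2, X i) * ∏ j ∈ τ2, (1 - X j))) = p := by
      have e1 : ((∏ i ∈ σ1, X i) * ∏ j ∈ τ1, (1 - X j)) *
          ((∏ i ∈ σ2, X i) * ∏ j ∈ τ2, (1 - X j))
          = ((∏ i ∈ σ1, X i) * ∏ i ∈ σ2, X i) *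
            ((∏ j ∈ τ1, ((1 : MvPolynomial (Fin n) (ZMod 2)) - X j)) * ∏ j ∈ τ2, (1 - X j)) :=
        mul_mul_mul_comm _ _ _ _
      have e : ((∏ i ∈ σ1, X i) * ∏ j ∈ τ1, (1 - X j)) *
          ((∏ i ∈ σ2, X i) * ∏ j ∈ τ2, (1 - X j))
          = (p * ∏ i ∈ σ1 ∩ σ2, X i) * ∏ j ∈ τ1 ∩ τ2, (1 - X j) := by
        rw [e1, ← Finset.prod_union_inter (f := fun i => (X i : MvPolynomial (Fin n) (ZMod 2))),
          ← Finset.prod_union_inter (f := fun j => ((1 : MvPolynomial (Fin n) (ZMod 2)) - X j)), hp]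
        ring
      rw [e]
      rw [sqReduce_absorb_sub n (τ1 ∩ τ2) _ (by
        intro j hj
        have hj' : j ∈ τ1 ∪ τ2 := Finset.mem_union_left _ (Finset.mem_inter.mp hj).1
        refine ⟨((∏ i ∈ σ1 ∪ σ2, X i) * ∏ k ∈ (τ1 ∪ τ2).erase j, (1 - X k)) *
          ∏ i ∈ σ1 ∩ σ2, X i, ?_⟩
        rw [hp, ← Finset.mul_prod_erase _ _ hj']
        ring)]
      rw [sqReduce_absorb_X n (σ1 ∩ σ2) _ pX]
      apply sqReduce_squarefree
      intro m hm i
      have := support_pm n (σ1 ∪ σ2) (τ1 ∪ τ2) hcase m hm i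
      split_ifs at this <;> omega
    rw [key]
    refine ⟨⟨σ1 ∪ σ2, τ1 ∪ τ2, hcase, rfl⟩, ?_, ?_⟩
    · refine ⟨(∏ i ∈ σ2 \ σ1, X i) * ∏ j ∈ τ2 \ τ1, (1 - X j), ?_⟩
      rw [hp, ← Finset.union_sdiff_self_eq_union (s := σ1) (t := σ2),
        ← Finset.union_sdiff_self_eq_union (s := τ1) (t := τ2),
        Finset.prod_union Finset.disjoint_sdiff, Finset.prod_union Finset.disjoint_sdiff]
      ring
    · refine ⟨(∏ i ∈ σ1 \ σ2, X i) * ∏ j ∈ τ1 \ τ2, (1 - X j), ?_⟩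
      rw [hp, Finset.union_comm σ1 σ2, Finset.union_comm τ1 τ2,
        ← Finset.union_sdiff_self_eq_union (s := σ2) (t := σ1),
        ← Finset.union_sdiff_self_eq_union (s := τ2) (t := τ1),
        Finset.prod_union Finset.disjoint_sdiff, Finset.prod_union Finset.disjoint_sdiff]
      ring
  · left
    obtain ⟨i, hi1, hi2⟩ := Finset.not_disjoint_iff.mp hcase
    have h1 : (X i : MvPolynomial (Fin n) (ZMod 2)) ∣ (∏ k ∈ σ1, X k) * ∏ k ∈ σ2, X k := by
      rcases Finset.mem_union.mp hi1 with h | h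
      · exact Dvd.dvd.mul_right (Finset.dvd_prod_of_mem _ h) _
      · exact Dvd.dvd.mul_left (Finset.dvd_prod_of_mem _ h) _
    have h2 : ((1 - X i) : MvPolynomial (Fin n) (ZMod 2)) ∣
        (∏ k ∈ τ1, (1 - X k)) * ∏ k ∈ τ2, (1 - X k) := by
      rcases Finset.mem_union.mp hi2 with h | h
      · exact Dvd.dvd.mul_right (Finset.dvd_prod_of_mem _ h) _
      · exact Dvd.dvd.mul_left (Finset.dvd_prod_of_mem _ h) _
    obtain ⟨r, hr⟩ := h1
    obtain ⟨t, ht⟩ := h2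
    have e : ((∏ k ∈ σ1, X k) * ∏ j ∈ τ1, ((1 : MvPolynomial (Fin n) (ZMod 2)) - X j)) *
        ((∏ k ∈ σ2, X k) * ∏ j ∈ τ2, ((1 : MvPolynomial (Fin n) (ZMod 2)) - X j)) = (r * t) * X i * (1 - X i) := by
      have : ((∏ k ∈ σ1, X k) * ∏ j ∈ τ1, ((1 : MvPolynomial (Fin n) (ZMod 2)) - X j)) *
          ((∏ k ∈ σ2, X k) * ∏ j ∈ τ2, ((1 : MvPolynomial (Fin n) (ZMod 2)) - X j))
          = ((∏ k ∈ σ1, X k) * ∏ k ∈ σ2, X k) *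
            ((∏ k ∈ τ1, (1 - X k)) * ∏ k ∈ τ2, (1 - X k)) := by ring
      rw [this, hr, ht]
      ring
    rw [e]
    exact sqReduce_mul_X_sub n (r * t) i
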